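/- For every real number d with |d| < 1, one has the upper bound 1 - H((1+d)/2) ≤ d² / (2·(log 2)·(1 - d²)). -/

import Mathlib

/-- Binary entropy function (base-2 logarithm), with the convention `0 * log 0 = 0`
(which holds automatically since `Real.logb 2 0 = 0`). -/
noncomputable def binH (p : ℝ) : ℝ := -p * Real.logb 2 p - (1 - p) * Real.logb 2 (1 - p)

lemma aux_log_one_add (d : ℝ) (hd : 0 ≤ d) :
    Real.log (1 + d) ≤ d - d ^ 2 / 2 + d ^ 3 / 3 := by
  have hder : ∀ x : ℝ, -1 < x →
      HasDerivAt (fun x : ℝ => x - x ^ 2 / 2 + x ^ 3 / 3 - Real.log (1 + x))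
        (x ^ 3 / (1 + x)) x := by
    intro x hx
    have hpos : (0:ℝ) < 1 + x := by linarith
    have h1 : HasDerivAt (fun x : ℝ => 1 + x) 1 x := (hasDerivAt_id x).const_add 1
    have hlog : HasDerivAt (fun x : ℝ => Real.log (1 + x)) (1 / (1 + x)) x := by
      exact ((Real.hasDerivAt_log hpos.ne').comp x h1).congr_deriv (by simp)
    have hpoly : HasDerivAt (fun x : ℝ => x - x ^ 2 / 2 + x ^ 3 / 3)
        (1 - x + x ^ 2) x := by
      have := (((hasDerivAt_id x).sub ((hasDerivAt_pow 2 x).div_const 2)).add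
        ((hasDerivAt_pow 3 x).div_const 3))
      refine this.congr_deriv ?_
      ring
    have := hpoly.sub hlog
    refine this.congr_deriv ?_
    field_simp
    ring
  have hmono : MonotoneOn (fun x : ℝ => x - x ^ 2 / 2 + x ^ 3 / 3 - Real.log (1 + x))
      (Set.Ici (0:ℝ)) := by
    apply monotoneOn_of_deriv_nonneg (convex_Ici 0)
    · intro x hx
      exact ((hder x (by simp at hx; linarith)).continuousAt).continuousWithinAt
    · intro x hx
      rw [interior_Ici] at hx
      exact ((hder x (by simp at hx; linarith)).differentiableAt).differentiableWithinAt
    · intro x hx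
      rw [interior_Ici] at hx
      simp only [Set.mem_Ioi] at hx
      rw [(hder x (by linarith)).deriv]
      positivity
  have h0 : (fun x : ℝ => x - x ^ 2 / 2 + x ^ 3 / 3 - Real.log (1 + x)) 0 ≤
      (fun x : ℝ => x - x ^ 2 / 2 + x ^ 3 / 3 - Real.log (1 + x)) d :=
    hmono (Set.self_mem_Ici) hd hd
  simp only [Real.log_one] at h0
  norm_num at h0
  linarith

lemma aux_log_one_sub (d : ℝ) (hd : 0 ≤ d) (hd1 : d < 1) :
    Real.log (1 - d) ≤ -d - d ^ 2 / 2 - d ^ 3 / 3 := by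
  have hder : ∀ x : ℝ, x < 1 →
      HasDerivAt (fun x : ℝ => -x - x ^ 2 / 2 - x ^ 3 / 3 - Real.log (1 - x))
        (x ^ 3 / (1 - x)) x := by
    intro x hx
    have hpos : (0:ℝ) < 1 - x := by linarith
    have h1 : HasDerivAt (fun x : ℝ => 1 - x) (-1) x := by
      simpa using ((hasDerivAt_id x).const_sub 1)
    have hlog : HasDerivAt (fun x : ℝ => Real.log (1 - x)) (-(1 / (1 - x))) x := by
      have := (Real.hasDerivAt_log hpos.ne').comp x h1
      refine this.congr_deriv ?_
      field_simp
    have hpoly : HasDerivAt (fun x : ℝ => -x - x ^ 2 / 2 - x ^ 3 / 3)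
        (-1 - x - x ^ 2) x := by
      have := (((hasDerivAt_id x).neg.sub ((hasDerivAt_pow 2 x).div_const 2)).sub
        ((hasDerivAt_pow 3 x).div_const 3))
      refine this.congr_deriv ?_
      ring
    have := hpoly.sub hlog
    refine this.congr_deriv ?_
    field_simp
    ring
  have hmono : MonotoneOn (fun x : ℝ => -x - x ^ 2 / 2 - x ^ 3 / 3 - Real.log (1 - x))
      (Set.Ico (0:ℝ) 1) := by
    apply monotoneOn_of_deriv_nonneg (convex_Ico 0 1)
    · intro x hx
      exact ((hder x hx.2).continuousAt).continuousWithinAt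
    · intro x hx
      rw [interior_Ico] at hx
      exact ((hder x hx.2).differentiableAt).differentiableWithinAt
    · intro x hx
      rw [interior_Ico] at hx
      rw [(hder x hx.2).deriv]
      obtain ⟨ha, hb⟩ := hx
      have h1x : (0:ℝ) < 1 - x := by linarith
      positivity
  have h0 : (fun x : ℝ => -x - x ^ 2 / 2 - x ^ 3 / 3 - Real.log (1 - x)) 0 ≤
      (fun x : ℝ => -x - x ^ 2 / 2 - x ^ 3 / 3 - Real.log (1 - x)) d :=
    hmono (by constructor <;> norm_num) ⟨hd, hd1⟩ hd
  simp only [sub_zero, Real.log_one] at h0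
  norm_num at h0
  linarith

lemma key_ineq (d : ℝ) (h0 : 0 ≤ d) (h1 : d < 1) :
    ((1 + d) * Real.log (1 + d) + (1 - d) * Real.log (1 - d)) * (1 - d ^ 2) ≤ d ^ 2 := by
  have hA := aux_log_one_add d h0
  have hB := aux_log_one_sub d h0 h1
  have c1 : (0:ℝ) ≤ 1 + d := by linarith
  have c2 : (0:ℝ) ≤ 1 - d := by linarith
  have hsq : (0:ℝ) < 1 - d ^ 2 := by nlinarith
  have hAB : (1 + d) * Real.log (1 + d) + (1 - d) * Real.log (1 - d) ≤
      d ^ 2 + 2 / 3 * d ^ 4 := by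
    nlinarith [mul_le_mul_of_nonneg_left hA c1, mul_le_mul_of_nonneg_left hB c2]
  nlinarith [hAB, hsq, sq_nonneg d, pow_nonneg h0 4]

lemma key_ineq' (d : ℝ) (hm : -1 < d) (h1 : d < 1) :
    ((1 + d) * Real.log (1 + d) + (1 - d) * Real.log (1 - d)) * (1 - d ^ 2) ≤ d ^ 2 := by
  rcases le_or_gt 0 d with h | h
  · exact key_ineq d h h1
  · have := key_ineq (-d) (by linarith) (by linarith)
    have e1 : (1:ℝ) + -d = 1 - d := by ring
    have e2 : (1:ℝ) - -d = 1 + d := by ring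
    rw [e1, e2] at this
    nlinarith [this]

/-- For every real `d` with `|d| < 1`, `1 - H((1+d)/2) ≤ d² / (2 (log 2) (1 - d²))`. -/
theorem one_sub_binH_le (d : ℝ) (hd : |d| < 1) :
    1 - binH ((1 + d) / 2) ≤ d ^ 2 / (2 * Real.log 2 * (1 - d ^ 2)) := by
  obtain ⟨hm, h1⟩ := abs_lt.mp hd
  have hL : (0:ℝ) < Real.log 2 := Real.log_pos (by norm_num)
  have hp : (0:ℝ) < 1 + d := by linarith
  have hq : (0:ℝ) < 1 - d := by linarith
  have hsq : (0:ℝ) < 1 - d ^ 2 := by nlinarith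
  have hE : 1 - binH ((1 + d) / 2) =
      ((1 + d) * Real.log (1 + d) + (1 - d) * Real.log (1 - d)) / (2 * Real.log 2) := by
    unfold binH
    have h2 : (1:ℝ) - (1 + d) / 2 = (1 - d) / 2 := by ring
    rw [h2, Real.logb, Real.logb, Real.log_div hp.ne' (by norm_num),
      Real.log_div hq.ne' (by norm_num)]
    field_simp
    ring
  rw [hE, div_le_div_iff₀ (by positivity) (by positivity)]
  have := key_ineq' d hm h1
  nlinarith [this, hL]
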